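/- If β = π(q₁,q₂,m) J π(q₁',q₂',m')* J⁻¹ commutes with the representation of the unreduced Pati-Salam algebra ℍ_R ⊕ ℍ_L ⊕ M_4(ℂ), commutes with J, and satisfies β² = 1 and β* = β, then β = π(η₁1₂, η₂1₂, η₃1₄) J π(η₁1₂, η₂1₂, η₃1₄) J⁻¹ for some signs η₁, η₂, η₃ ∈ {±1}. -/

import Mathlib

noncomputable section
open Matrix
open scoped ComplexConjugate

abbrev M2 : Type := Matrix (Fin 2) (Fin 2) ℂ
abbrev M3 : Type := Matrix (Fin 3) (Fin 3) ℂ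
abbrev M4 : Type := Matrix (Fin 4) (Fin 4) ℂ
abbrev Idx : Type := Fin 4 × Fin 2 × Fin 4
abbrev M32 : Type := Matrix Idx Idx ℂ

/-- matrix unit `e_{ij}` -/
def eu {n : ℕ} (i j : Fin n) : Matrix (Fin n) (Fin n) ℂ := Matrix.single i j 1

/-- the element `A ⊗ E ⊗ B` of `M₄(ℂ) ⊗ M₂(ℂ) ⊗ M₄(ℂ)` realized as a matrix on `ℂ⁴ ⊗ ℂ² ⊗ ℂ⁴` -/
def tp (A : M4) (E : M2) (B : M4) : M32 :=
  Matrix.of fun p q => A p.1 q.1 * E p.2.1 q.2.1 * B p.2.2 q.2.2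

/-- a 4×4 matrix assembled from four 2×2 blocks -/
def bm (a b c d : M2) : M4 :=
  Matrix.reindex finSumFinEquiv finSumFinEquiv (Matrix.fromBlocks a b c d)

/-- block-diagonal `diag(a, b)` with 2×2 blocks -/
def diag22 (a b : M2) : M4 := bm a 0 0 b

/-- block-diagonal `diag(l, n)` with a scalar and a 3×3 block -/
def diag13 (l : ℂ) (n : M3) : M4 :=
  Matrix.reindex finSumFinEquiv finSumFinEquiv
    (Matrix.fromBlocks (Matrix.diagonal fun _ : Fin 1 => l) 0 0 n)

/-- the standard embedding of the quaternions into `M₂(ℂ)` -/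
def IsQuat (q : M2) : Prop := ∃ x y : ℂ, q = !![x, y; -(conj y), conj x]

/-- the Hilbert space `ℂ⁴ ⊗ ℂ² ⊗ ℂ⁴ ≅ M₄(ℂ) ⊕ M₄(ℂ)` -/
abbrev HSp : Type := Idx → ℂ

/-- index swap underlying the real structure `J` -/
def sw (p : Idx) : Idx := (p.2.2, if p.2.1 = 0 then 1 else 0, p.1)

/-- the antilinear real structure `J[v;w] = [w*;v*]` -/
noncomputable def Jr (ψ : HSp) : HSp := fun p => conj (ψ (sw p))

/-- action of an operator on the Hilbert space -/
def act (X : M32) (ψ : HSp) : HSp := X.mulVec ψ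

/-- conjugation `X ↦ J X J⁻¹` by the real structure, at the matrix level -/
noncomputable def Jconj (X : M32) : M32 := Matrix.of fun p q => conj (X (sw p) (sw q))

/-- the opposite-algebra element `J X* J⁻¹` -/
noncomputable def opp (X : M32) : M32 := Jconj Xᴴ

/-- representation of the (unreduced) Pati–Salam algebra `ℍ_R ⊕ ℍ_L ⊕ M₄(ℂ)` -/
def piPS (q₁ q₂ : M2) (m : M4) : M32 :=
  tp (diag22 q₁ q₂) (eu 0 0) 1 + tp m (eu 1 1) 1

/-- representation of the reduced Pati–Salam algebra `ℍ_R ⊕ ℍ_L ⊕ ℂ ⊕ M₃(ℂ)` -/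
def piRed (q₁ q₂ : M2) (l : ℂ) (n : M3) : M32 := piPS q₁ q₂ (diag13 l n)

/-- the grading γ -/
def gam : M32 := tp (diag22 1 (-1)) (eu 0 0) 1 + tp 1 (eu 1 1) (diag22 (-1) 1)

/-- the grading γ⋆ -/
def gamStar : M32 :=
  tp (diag22 1 (-1)) (eu 0 0) (diag13 1 (-1)) + tp (diag13 (-1) 1) (eu 1 1) (diag22 1 (-1))

/-- the nontrivial β for the unreduced model -/
def betaPS : M32 := tp (diag22 1 (-1)) (eu 0 0) 1 + tp 1 (eu 1 1) (diag22 1 (-1))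


set_option linter.unnecessarySeqFocus false

lemma tp_mul (A A' : M4) (E E' : M2) (B B' : M4) :
    tp A E B * tp A' E' B' = tp (A*A') (E*E') (B*B') := by
  ext p q
  simp only [tp, Matrix.mul_apply, Matrix.of_apply, Fintype.sum_prod_type,
    Fin.sum_univ_four, Fin.sum_univ_two]
  ring

lemma eu_mul_same {n : ℕ} (i j k : Fin n) : eu i j * eu j k = eu i k := by
  simp [eu, Matrix.single_mul_single_same]

lemma eu_mul_ne {n : ℕ} (i j k l : Fin n) (h : j ≠ k) : eu i j * eu k l = 0 := by
  simp [eu, h]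

lemma eu_apply {n : ℕ} (i j a b : Fin n) : eu i j a b = if i = a ∧ j = b then 1 else 0 := by
  simp [eu, Matrix.single, Matrix.of_apply]

lemma tp_zeroE (A B : M4) : tp A 0 B = 0 := by
  ext p q; simp [tp]

lemma one_tp : (1 : M32) = tp 1 (eu 0 0) 1 + tp 1 (eu 1 1) 1 := by
  ext p q
  obtain ⟨i, s, k⟩ := p; obtain ⟨j, t, l⟩ := q
  fin_cases s <;> fin_cases t <;>
    simp [tp, Matrix.one_apply, eu_apply, Prod.ext_iff] <;>
    by_cases h1 : i = j <;> by_cases h2 : k = l <;> simp [h1, h2]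

lemma sectors {A B C D A' B' C' D' : M4}
    (h : tp A (eu 0 0) B + tp C (eu 1 1) D = tp A' (eu 0 0) B' + tp C' (eu 1 1) D') :
    (∀ i j k l, A i j * B k l = A' i j * B' k l) ∧
    (∀ i j k l, C i j * D k l = C' i j * D' k l) := by
  constructor
  · intro i j k l
    have := congrFun (congrFun h (i, 0, k)) (j, 0, l)
    simpa [tp, eu_apply] using this
  · intro i j k l
    have := congrFun (congrFun h (i, 1, k)) (j, 1, l)
    simpa [tp, eu_apply] using this

lemma sectors' {A B C D A' B' C' D' : M4}
    (h0 : ∀ i j k l, A i j * B k l = A' i j * B' k l)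
    (h1 : ∀ i j k l, C i j * D k l = C' i j * D' k l) :
    tp A (eu 0 0) B + tp C (eu 1 1) D = tp A' (eu 0 0) B' + tp C' (eu 1 1) D' := by
  ext p q
  obtain ⟨i, s, k⟩ := p; obtain ⟨j, t, l⟩ := q
  fin_cases s <;> fin_cases t <;>
    simp [tp, eu_apply, h0 i j k l, h1 i j k l]

lemma diag22_exp (a b : M2) :
    diag22 a b = !![a 0 0, a 0 1, 0, 0; a 1 0, a 1 1, 0, 0;
                    0, 0, b 0 0, b 0 1; 0, 0, b 1 0, b 1 1] := by
  ext i j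
  fin_cases i <;> fin_cases j <;>
    simp [diag22, bm, Matrix.fromBlocks, finSumFinEquiv, Fin.ext_iff] <;> rfl

lemma opp_apply (X : M32) (p q : Idx) : opp X p q = X (sw q) (sw p) := by
  simp [opp, Jconj, Matrix.conjTranspose_apply]

lemma opp_tp00 (A B : M4) : opp (tp A (eu 0 0) B) = tp Bᵀ (eu 1 1) Aᵀ := by
  ext p q
  obtain ⟨i, s, k⟩ := p; obtain ⟨j, t, l⟩ := q
  rw [opp_apply]
  fin_cases s <;> fin_cases t <;> simp [tp, sw, eu_apply] <;> ring

lemma opp_tp11 (A B : M4) : opp (tp A (eu 1 1) B) = tp Bᵀ (eu 0 0) Aᵀ := by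
  ext p q
  obtain ⟨i, s, k⟩ := p; obtain ⟨j, t, l⟩ := q
  rw [opp_apply]
  fin_cases s <;> fin_cases t <;> simp [tp, sw, eu_apply] <;> ring

lemma opp_add (X Y : M32) : opp (X + Y) = opp X + opp Y := by
  ext p q; simp [opp_apply]

lemma Jconj_add (X Y : M32) : Jconj (X + Y) = Jconj X + Jconj Y := by
  ext p q; simp [Jconj]

lemma Jconj_tp00 (A B : M4) :
    Jconj (tp A (eu 0 0) B) = tp (B.map conj) (eu 1 1) (A.map conj) := by
  ext p q
  obtain ⟨i, s, k⟩ := p; obtain ⟨j, t, l⟩ := q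
  fin_cases s <;> fin_cases t <;> simp [tp, sw, eu_apply, Jconj] <;> ring

lemma Jconj_tp11 (A B : M4) :
    Jconj (tp A (eu 1 1) B) = tp (B.map conj) (eu 0 0) (A.map conj) := by
  ext p q
  obtain ⟨i, s, k⟩ := p; obtain ⟨j, t, l⟩ := q
  fin_cases s <;> fin_cases t <;> simp [tp, sw, eu_apply, Jconj] <;> ring

lemma ct_tp (A B : M4) (E : M2) : (tp A E B)ᴴ = tp Aᴴ Eᴴ Bᴴ := by
  ext p q; simp [tp, Matrix.conjTranspose_apply]

lemma eu00_ct : (eu 0 0 : M2)ᴴ = eu 0 0 := by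
  ext a b; fin_cases a <;> fin_cases b <;> simp [eu_apply, Matrix.conjTranspose_apply]

lemma eu11_ct : (eu 1 1 : M2)ᴴ = eu 1 1 := by
  ext a b; fin_cases a <;> fin_cases b <;> simp [eu_apply, Matrix.conjTranspose_apply]

lemma central_scalar (m : M4) (h : ∀ n : M4, m * n = n * m) : m = m 0 0 • 1 := by
  ext i j
  have h1 := congrFun (congrFun (h (Matrix.single j 0 1)) i) 0
  fin_cases i <;> fin_cases j <;>
    simp [Matrix.mul_apply, Matrix.single, Fin.sum_univ_four,
      Matrix.one_apply] at h1 ⊢ <;> simp [h1]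

lemma mul_sectors (A B C D A' B' C' D' : M4) :
    (tp A (eu 0 0) B + tp C (eu 1 1) D) * (tp A' (eu 0 0) B' + tp C' (eu 1 1) D')
    = tp (A*A') (eu 0 0) (B*B') + tp (C*C') (eu 1 1) (D*D') := by
  simp only [add_mul, mul_add, tp_mul]
  rw [eu_mul_same 0 0 0, eu_mul_same 1 1 1,
    eu_mul_ne 0 0 1 1 (by decide), eu_mul_ne 1 1 0 0 (by decide), tp_zeroE, tp_zeroE]
  abel

lemma beta_form (a b a' b' : M2) (c c' : M4) :
    piPS a b c * opp (piPS a' b' c')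
    = tp (diag22 a b) (eu 0 0) c'ᵀ + tp c (eu 1 1) (diag22 a' b')ᵀ := by
  rw [piPS, piPS, opp_add, opp_tp00, opp_tp11, Matrix.transpose_one,
    add_comm (tp 1 (eu 1 1) (diag22 a' b')ᵀ), mul_sectors]
  simp

lemma isQuat_one : IsQuat 1 := by
  refine ⟨1, 0, ?_⟩
  ext a b; fin_cases a <;> fin_cases b <;> simp [Matrix.one_apply]

lemma isQuat_J : IsQuat !![0, 1; -1, 0] := by
  refine ⟨0, 1, ?_⟩
  ext a b; fin_cases a <;> fin_cases b <;> simp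

lemma isQuat_K : IsQuat !![Complex.I, 0; 0, -Complex.I] := by
  refine ⟨Complex.I, 0, ?_⟩
  ext a b; fin_cases a <;> fin_cases b <;> simp [Complex.conj_I]


/-- Any `β = π(q₁,q₂,m) J π(q₁',q₂',m')* J⁻¹` commuting with the represented
unreduced Pati–Salam algebra and with `J`, with `β² = 1` and `β* = β`, equals
`π(η₁1₂, η₂1₂, η₃1₄) J π(η₁1₂, η₂1₂, η₃1₄)* J⁻¹` for some signs `η₁, η₂, η₃`. -/
theorem beta_unreduced_form (q₁ q₂ q₁' q₂' : M2) (m m' : M4)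
    (h₁ : IsQuat q₁) (h₂ : IsQuat q₂) (h₁' : IsQuat q₁') (h₂' : IsQuat q₂')
    (β : M32) (hβ : β = piPS q₁ q₂ m * opp (piPS q₁' q₂' m'))
    (hcomm : ∀ (p₁ p₂ : M2) (n : M4), IsQuat p₁ → IsQuat p₂ →
      β * piPS p₁ p₂ n = piPS p₁ p₂ n * β)
    (hJ : Jconj β = β) (hsq : β * β = 1) (hsa : βᴴ = β) :
    ∃ η₁ η₂ η₃ : ℂ, (η₁ = 1 ∨ η₁ = -1) ∧ (η₂ = 1 ∨ η₂ = -1) ∧ (η₃ = 1 ∨ η₃ = -1) ∧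
      β = piPS (η₁ • 1) (η₂ • 1) (η₃ • 1) * opp (piPS (η₁ • 1) (η₂ • 1) (η₃ • 1)) := by
  obtain ⟨x₁, y₁, hq₁⟩ := h₁
  obtain ⟨x₂, y₂, hq₂⟩ := h₂
  set D : M4 := diag22 q₁ q₂ with hDdef
  set B : M4 := m'ᵀ with hBdef
  set D'' : M4 := (diag22 q₁' q₂')ᵀ with hD''def
  have hβt : β = tp D (eu 0 0) B + tp m (eu 1 1) D'' := by
    rw [hβ, beta_form]
  -- squared condition, sector-wise
  have hsqt := hsq
  rw [hβt, mul_sectors, one_tp] at hsqt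
  obtain ⟨E00, E11⟩ := sectors hsqt
  -- nonvanishing entries
  have hBne : ∃ r : Fin 4, B 0 r ≠ 0 := by
    have h := E00 0 0 0 0
    simp [Matrix.one_apply] at h
    have hBB : (B * B) 0 0 ≠ 0 := by
      intro h0; rw [h0, mul_zero] at h; exact zero_ne_one h
    rw [Matrix.mul_apply] at hBB
    obtain ⟨r, _, hr⟩ := Finset.exists_ne_zero_of_sum_ne_zero hBB
    exact ⟨r, left_ne_zero_of_mul hr⟩
  have hD''ne : ∃ r : Fin 4, D'' 0 r ≠ 0 := by
    have h := E11 0 0 0 0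
    simp [Matrix.one_apply] at h
    have hDD : (D'' * D'') 0 0 ≠ 0 := by
      intro h0; rw [h0, mul_zero] at h; exact zero_ne_one h
    rw [Matrix.mul_apply] at hDD
    obtain ⟨r, _, hr⟩ := Finset.exists_ne_zero_of_sum_ne_zero hDD
    exact ⟨r, left_ne_zero_of_mul hr⟩
  obtain ⟨l0, hB0⟩ := hBne
  obtain ⟨l1, hD0⟩ := hD''ne
  -- commutation, sector-wise
  have key : ∀ (p₁ p₂ : M2) (n : M4), IsQuat p₁ → IsQuat p₂ →
      (∀ i j k l, (D * diag22 p₁ p₂) i j * B k l = (diag22 p₁ p₂ * D) i j * B k l) ∧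
      (∀ i j k l, (m * n) i j * D'' k l = (n * m) i j * D'' k l) := by
    intro p₁ p₂ n hp₁ hp₂
    have h := hcomm p₁ p₂ n hp₁ hp₂
    rw [hβt, piPS, mul_sectors, mul_sectors] at h
    simp only [Matrix.mul_one, Matrix.one_mul] at h
    exact sectors h
  -- m is scalar
  have hmc : ∀ n : M4, m * n = n * m := by
    intro n
    have h := (key 1 1 n isQuat_one isQuat_one).2
    ext i j
    exact mul_right_cancel₀ hD0 (h i j 0 l1)
  set μ : ℂ := m 0 0 with hμdef
  have hm : m = μ • 1 := central_scalar m hmc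
  -- D commutes with quaternionic block matrices
  have hDc : ∀ p₁ p₂ : M2, IsQuat p₁ → IsQuat p₂ →
      D * diag22 p₁ p₂ = diag22 p₁ p₂ * D := by
    intro p₁ p₂ hp₁ hp₂
    have h := (key p₁ p₂ 1 hp₁ hp₂).1
    ext i j
    exact mul_right_cancel₀ hB0 (h i j 0 l0)
  -- explicit form of D
  have hD : D = !![x₁, y₁, 0, 0; -(conj y₁), conj x₁, 0, 0;
                   0, 0, x₂, y₂; 0, 0, -(conj y₂), conj x₂] := by
    rw [hDdef, hq₁, hq₂, diag22_exp]
    norm_num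
  have hPJ : diag22 !![0, 1; -1, 0] !![0, 1; -1, 0]
      = !![0, 1, 0, 0; -1, 0, 0, 0; 0, 0, 0, 1; 0, 0, -1, 0] := by
    rw [diag22_exp]; norm_num
  have hPK : diag22 !![Complex.I, 0; 0, -Complex.I] !![Complex.I, 0; 0, -Complex.I]
      = !![Complex.I, 0, 0, 0; 0, -Complex.I, 0, 0;
           0, 0, Complex.I, 0; 0, 0, 0, -Complex.I] := by
    rw [diag22_exp]; norm_num
  have hcJ := hDc _ _ isQuat_J isQuat_J
  have hcK := hDc _ _ isQuat_K isQuat_K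
  rw [hPJ, hD] at hcJ
  rw [hPK, hD] at hcK
  have hx₁ : conj x₁ = x₁ := by
    have := congrFun (congrFun hcJ 0) 1
    simpa [Matrix.mul_apply, Fin.sum_univ_four] using this.symm
  have hx₂ : conj x₂ = x₂ := by
    have := congrFun (congrFun hcJ 2) 3
    simpa [Matrix.mul_apply, Fin.sum_univ_four] using this.symm
  have hy₁ : y₁ = 0 := by
    have h := congrFun (congrFun hcK 0) 1
    simp [Matrix.mul_apply, Fin.sum_univ_four] at h
    have h2 : y₁ * (2 * Complex.I) = 0 := by linear_combination -h
    exact (mul_eq_zero.mp h2).resolve_right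
      (mul_ne_zero two_ne_zero Complex.I_ne_zero)
  have hy₂ : y₂ = 0 := by
    have h := congrFun (congrFun hcK 2) 3
    simp [Matrix.mul_apply, Fin.sum_univ_four] at h
    have h2 : y₂ * (2 * Complex.I) = 0 := by linear_combination -h
    exact (mul_eq_zero.mp h2).resolve_right
      (mul_ne_zero two_ne_zero Complex.I_ne_zero)
  -- J-invariance, sector-wise
  have hJt := hJ
  rw [hβt, Jconj_add, Jconj_tp00, Jconj_tp11,
    add_comm (tp (B.map conj) (eu 1 1) (D.map conj))] at hJt
  obtain ⟨J00, _⟩ := sectors hJt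
  -- simplify the explicit form of D
  subst hy₁; subst hy₂
  simp only [map_zero, neg_zero, hx₁, hx₂] at hD
  -- μ ≠ 0
  have hμ0 : μ ≠ 0 := by
    have h := E11 0 0 0 0
    simp [Matrix.one_apply] at h
    have hmm : (m * m) 0 0 ≠ 0 := by
      intro h0; rw [h0, zero_mul] at h; exact zero_ne_one h
    intro h0
    apply hmm
    rw [hm, h0]
    simp
  -- x₁, x₂ ≠ 0
  have hx₁0 : x₁ ≠ 0 := by
    have h := E00 0 0 0 0
    simp [Matrix.one_apply] at h
    intro h0
    rw [hD] at h
    simp [Matrix.mul_apply, Fin.sum_univ_four, h0] at h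
  have hx₂0 : x₂ ≠ 0 := by
    have h := E00 2 2 0 0
    simp [Matrix.one_apply] at h
    intro h0
    rw [hD] at h
    simp [Matrix.mul_apply, Fin.sum_univ_four, h0] at h
  -- B is scalar
  set ν : ℂ := B 0 0 with hνdef
  have hBent : ∀ k l, x₁ * B k l = conj (D'' 0 0) * conj μ * (if k = l then 1 else 0) := by
    intro k l
    have h := J00 0 0 k l
    rw [hD, hm] at h
    by_cases hkl : k = l
    · subst hkl
      simp only [Matrix.map_apply, Matrix.smul_apply, Matrix.one_apply, if_pos rfl] at h ⊢
      norm_num at h ⊢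
      linear_combination -h
    · simp only [Matrix.map_apply, Matrix.smul_apply, Matrix.one_apply, hkl, if_false] at h ⊢
      norm_num at h ⊢
      tauto
  have hBs : B = ν • 1 := by
    ext k l
    have h := hBent k l
    have h0 := hBent 0 0
    simp at h0
    simp [Matrix.smul_apply, Matrix.one_apply]
    by_cases hkl : k = l <;> simp [hkl] at h ⊢
    · apply mul_left_cancel₀ hx₁0; rw [h, h0]
    · rcases h with h' | h'
      · exact absurd h' hx₁0
      · exact h'
  -- entries of D are real
  have hDreal : ∀ k l, conj (D k l) = D k l := by
    intro k l
    rw [hD]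
    fin_cases k <;> fin_cases l <;> simp [hx₁, hx₂, Matrix.vecHead, Matrix.vecTail]
  -- reality of ν
  have hsat := hsa
  rw [hβt] at hsat
  simp only [Matrix.conjTranspose_add, ct_tp, eu00_ct, eu11_ct] at hsat
  obtain ⟨H00, _⟩ := sectors hsat
  have hν : conj (B 0 0) = B 0 0 := by
    have h := H00 0 0 0 0
    simp only [Matrix.conjTranspose_apply, Complex.star_def] at h
    rw [hDreal] at h
    have hD00 : D 0 0 = x₁ := by rw [hD]; norm_num
    rw [hD00] at h
    exact mul_left_cancel₀ hx₁0 h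
  -- D'' in terms of D
  have hD''ent : ∀ k l, μ * D'' k l = D k l * ν := by
    intro k l
    have h := J00 k l 0 0
    rw [hm] at h
    simp only [Matrix.map_apply, Matrix.smul_apply, Matrix.one_apply, if_pos rfl,
      if_true, smul_eq_mul, mul_one, _root_.map_mul] at h
    have h' := congrArg conj h
    simp only [_root_.map_mul, Complex.conj_conj, if_true, mul_one] at h'
    rw [hDreal, hν] at h'
    rw [← hνdef] at h'
    linear_combination h'
  -- the signs square to one
  have hs₁ : (x₁ * ν) * (x₁ * ν) = 1 := by
    have h := E00 0 0 0 0
    rw [hD, hBs] at h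
    simp [Matrix.mul_apply, Fin.sum_univ_four, Matrix.one_apply,
      Matrix.smul_apply] at h
    linear_combination h
  have hs₂ : (x₂ * ν) * (x₂ * ν) = 1 := by
    have h := E00 2 2 0 0
    rw [hD, hBs] at h
    simp [Matrix.mul_apply, Fin.sum_univ_four, Matrix.one_apply,
      Matrix.smul_apply] at h
    linear_combination h
  refine ⟨x₁ * ν, x₂ * ν, 1, mul_self_eq_one_iff.mp hs₁, mul_self_eq_one_iff.mp hs₂,
    Or.inl rfl, ?_⟩
  rw [hβt, beta_form]
  apply sectors'
  · intro i j k l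
    rw [hD, hBs, diag22_exp]
    by_cases hkl : k = l
    · subst hkl
      fin_cases i <;> fin_cases j <;>
        simp [Matrix.smul_apply, Matrix.one_apply, Matrix.transpose_apply,
          Matrix.vecHead, Matrix.vecTail] <;> ring
    · fin_cases i <;> fin_cases j <;>
        simp [Matrix.smul_apply, Matrix.one_apply, Matrix.transpose_apply,
          Matrix.vecHead, Matrix.vecTail, hkl, Ne.symm hkl]
  · intro i j k l
    rw [hm]
    simp only [Matrix.smul_apply, Matrix.one_apply, Matrix.transpose_apply, one_smul,
      smul_eq_mul]
    by_cases hij : i = j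
    · simp only [hij, if_pos rfl, if_true, one_mul, mul_one]
      rw [hD''ent k l, hD, diag22_exp]
      fin_cases k <;> fin_cases l <;>
        simp [Matrix.vecHead, Matrix.vecTail] <;> ring
    · simp [hij, Ne.symm hij]
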